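/- Let (A_n, B_n) be the anti-recurrence pair for a = (1,2) (anti-Pell), and write B^1_n = B_{2n-1}, B^2_n = B_{2n}. Then 0 ≤ 3·B^1_n - 7n + 6 ≤ 3 and 0 ≤ 3·B^2_n - 7n + 2 ≤ 3 for all n ≥ 1. -/
import Mathlib


/-- `A` and `B` (indexed from 1) are complementary strictly increasing sequences
of positive integers: every positive integer lies in exactly one of their ranges. -/
def CompPair (A B : ℕ → ℕ) : Prop :=
  StrictMonoOn A (Set.Ici 1) ∧ StrictMonoOn B (Set.Ici 1) ∧
  (∀ n, 1 ≤ n → 1 ≤ A n) ∧ (∀ n, 1 ≤ n → 1 ≤ B n) ∧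
  ∀ m, 1 ≤ m →
    ((∃ n, 1 ≤ n ∧ A n = m) ∧ ¬(∃ n, 1 ≤ n ∧ B n = m)) ∨
    (¬(∃ n, 1 ≤ n ∧ A n = m) ∧ (∃ n, 1 ≤ n ∧ B n = m))

/-- `(A, B)` is the anti-recurrence pair for the positive linear form `a` of dimension `k`:
`A n = Σ_{j=1}^k a_j * B_{(n-1)k+j}` for all `n ≥ 1`. -/
def AntiRec (k : ℕ) (a : Fin k → ℕ) (A B : ℕ → ℕ) : Prop :=
  CompPair A B ∧
  ∀ n, 1 ≤ n → A n = ∑ j : Fin k, a j * B ((n - 1) * k + (j : ℕ) + 1)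

/-- A strictly increasing (on `Ici 1`) sequence of positive integers dominates the identity. -/
lemma antiPell_ge_id {f : ℕ → ℕ} (hf : StrictMonoOn f (Set.Ici 1)) (h1 : 1 ≤ f 1) :
    ∀ j, 1 ≤ j → j ≤ f j := by
  intro j hj
  induction j with
  | zero => omega
  | succ k ih =>
    rcases Nat.lt_or_ge k 1 with hk | hk
    · interval_cases k
      simpa using h1
    · have h2 : f k < f (k + 1) :=
        hf (Set.mem_Ici.2 hk) (Set.mem_Ici.2 (by omega)) (by omega)
      have := ih hk
      omega

/-- A downward-closed finite set of positive integers is an initial interval. -/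
lemma antiPell_downward (S : Finset ℕ) (h0 : ∀ j ∈ S, 1 ≤ j)
    (hdc : ∀ j ∈ S, ∀ i, 1 ≤ i → i ≤ j → i ∈ S) :
    S = Finset.Icc 1 S.card := by
  rcases S.eq_empty_or_nonempty with h | h
  · simp [h]
  · have hm := S.max'_mem h
    have hS : S = Finset.Icc 1 (S.max' h) := by
      ext x
      simp only [Finset.mem_Icc]
      constructor
      · intro hx
        exact ⟨h0 x hx, S.le_max' x hx⟩
      · rintro ⟨h1, h2⟩
        exact hdc _ hm x h1 h2
    rw [hS]
    congr 1
    simp [Nat.card_Icc]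

/-- The counting identity coming from complementarity. -/
lemma antiPell_count {A B : ℕ → ℕ} (hC : CompPair A B) (M : ℕ) :
    M = ((Finset.Icc 1 M).filter (fun j => A j ≤ M)).card
      + ((Finset.Icc 1 M).filter (fun j => B j ≤ M)).card := by
  classical
  obtain ⟨hA, hB, hA1, hB1, hcomp⟩ := hC
  have hAid := antiPell_ge_id hA (hA1 1 le_rfl)
  have hBid := antiPell_ge_id hB (hB1 1 le_rfl)
  set VA := (Finset.Icc 1 M).filter (fun m => ∃ j, 1 ≤ j ∧ A j = m) with hVA
  set VB := (Finset.Icc 1 M).filter (fun m => ∃ j, 1 ≤ j ∧ B j = m) with hVB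
  have hunion : VA ∪ VB = Finset.Icc 1 M := by
    apply Finset.Subset.antisymm
    · apply Finset.union_subset <;> exact Finset.filter_subset _ _
    · intro m hm
      have hm1 : 1 ≤ m := (Finset.mem_Icc.1 hm).1
      rcases hcomp m hm1 with ⟨hex, _⟩ | ⟨_, hex⟩
      · exact Finset.mem_union_left _ (Finset.mem_filter.2 ⟨hm, hex⟩)
      · exact Finset.mem_union_right _ (Finset.mem_filter.2 ⟨hm, hex⟩)
  have hdisj : Disjoint VA VB := by
    rw [Finset.disjoint_left]
    intro m hmA hmB
    have h1 := (Finset.mem_filter.1 hmA).2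
    have h2 := (Finset.mem_filter.1 hmB).2
    have hm1 : 1 ≤ m := (Finset.mem_Icc.1 (Finset.mem_filter.1 hmA).1).1
    rcases hcomp m hm1 with ⟨_, hn⟩ | ⟨hn, _⟩
    · exact hn h2
    · exact hn h1
  have hcard : VA.card + VB.card = M := by
    rw [← Finset.card_union_of_disjoint hdisj, hunion]
    simp [Nat.card_Icc]
  have hAcard : ((Finset.Icc 1 M).filter (fun j => A j ≤ M)).card = VA.card := by
    apply Finset.card_bij (fun j _ => A j)
    · intro j hj
      simp only [Finset.mem_filter, Finset.mem_Icc] at hj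
      rw [hVA]
      simp only [Finset.mem_filter, Finset.mem_Icc]
      exact ⟨⟨hA1 j hj.1.1, hj.2⟩, j, hj.1.1, rfl⟩
    · intro j hj j' hj' hjj'
      simp only [Finset.mem_filter, Finset.mem_Icc] at hj hj'
      exact hA.injOn (Set.mem_Ici.2 hj.1.1) (Set.mem_Ici.2 hj'.1.1) hjj'
    · intro m hm
      rw [hVA] at hm
      simp only [Finset.mem_filter, Finset.mem_Icc] at hm
      obtain ⟨⟨hm1, hmM⟩, j, hj1, hjm⟩ := hm
      refine ⟨j, ?_, hjm⟩
      simp only [Finset.mem_filter, Finset.mem_Icc]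
      have := hAid j hj1
      omega
  have hBcard : ((Finset.Icc 1 M).filter (fun j => B j ≤ M)).card = VB.card := by
    apply Finset.card_bij (fun j _ => B j)
    · intro j hj
      simp only [Finset.mem_filter, Finset.mem_Icc] at hj
      rw [hVB]
      simp only [Finset.mem_filter, Finset.mem_Icc]
      exact ⟨⟨hB1 j hj.1.1, hj.2⟩, j, hj.1.1, rfl⟩
    · intro j hj j' hj' hjj'
      simp only [Finset.mem_filter, Finset.mem_Icc] at hj hj'
      exact hB.injOn (Set.mem_Ici.2 hj.1.1) (Set.mem_Ici.2 hj'.1.1) hjj'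
    · intro m hm
      rw [hVB] at hm
      simp only [Finset.mem_filter, Finset.mem_Icc] at hm
      obtain ⟨⟨hm1, hmM⟩, j, hj1, hjm⟩ := hm
      refine ⟨j, ?_, hjm⟩
      simp only [Finset.mem_filter, Finset.mem_Icc]
      have := hBid j hj1
      omega
  omega

/-- The key structural fact: `B k = k + c` where `c` counts the `A`-values below `B k`,
and `c` is characterized by `A c ≤ B k < A (c+1)`. -/
lemma antiPell_key {A B : ℕ → ℕ} (hC : CompPair A B) (k : ℕ) (hk : 1 ≤ k) :
    ∃ c, B k = k + c ∧ (1 ≤ c → A c ≤ B k) ∧ B k < A (c + 1) ∧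
      ∀ j, 1 ≤ j → A j ≤ B k → j ≤ c := by
  classical
  obtain ⟨hA, hB, hA1, hB1, hcomp⟩ := hC
  have hAid := antiPell_ge_id hA (hA1 1 le_rfl)
  have hBid := antiPell_ge_id hB (hB1 1 le_rfl)
  set M := B k with hM
  set S := (Finset.Icc 1 M).filter (fun j => A j ≤ M) with hS
  have hmemS : ∀ j, j ∈ S ↔ (1 ≤ j ∧ A j ≤ M) := by
    intro j
    simp only [hS, Finset.mem_filter, Finset.mem_Icc]
    constructor
    · rintro ⟨⟨h1, _⟩, h2⟩; exact ⟨h1, h2⟩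
    · rintro ⟨h1, h2⟩
      have := hAid j h1
      exact ⟨⟨h1, by omega⟩, h2⟩
  have hdc : S = Finset.Icc 1 S.card := by
    apply antiPell_downward
    · intro j hj; exact ((hmemS j).1 hj).1
    · intro j hj i hi1 hij
      obtain ⟨hj1, hjM⟩ := (hmemS j).1 hj
      rcases Nat.eq_or_lt_of_le hij with rfl | hlt
      · exact hj
      · have : A i < A j := hA (Set.mem_Ici.2 hi1) (Set.mem_Ici.2 hj1) hlt
        exact (hmemS i).2 ⟨hi1, by omega⟩
  have hmemS' : ∀ j, 1 ≤ j → (A j ≤ M ↔ j ≤ S.card) := by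
    intro j hj
    constructor
    · intro hAj
      have : j ∈ S := (hmemS j).2 ⟨hj, hAj⟩
      rw [hdc, Finset.mem_Icc] at this
      exact this.2
    · intro hjc
      have : j ∈ S := by
        rw [hdc, Finset.mem_Icc]; exact ⟨hj, hjc⟩
      exact ((hmemS j).1 this).2
  have hNB : (Finset.Icc 1 M).filter (fun j => B j ≤ M) = Finset.Icc 1 k := by
    ext j
    simp only [Finset.mem_filter, Finset.mem_Icc]
    constructor
    · rintro ⟨⟨h1, _⟩, h3⟩
      refine ⟨h1, ?_⟩
      by_contra hcon
      push_neg at hcon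
      have : B k < B j := hB (Set.mem_Ici.2 hk) (Set.mem_Ici.2 h1) hcon
      omega
    · rintro ⟨h1, h2⟩
      have hBj : B j ≤ B k := by
        rcases Nat.eq_or_lt_of_le h2 with rfl | hlt
        · exact le_rfl
        · exact le_of_lt (hB (Set.mem_Ici.2 h1) (Set.mem_Ici.2 hk) hlt)
      have := hBid j h1
      exact ⟨⟨h1, by omega⟩, hBj⟩
  have hcount := antiPell_count ⟨hA, hB, hA1, hB1, hcomp⟩ M
  rw [hNB, ← hS] at hcount
  have hkcard : (Finset.Icc 1 k).card = k := by simp [Nat.card_Icc]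
  refine ⟨S.card, by omega, ?_, ?_, ?_⟩
  · intro hc1
    exact (hmemS' S.card hc1).2 le_rfl
  · by_contra hcon
    push_neg at hcon
    have := (hmemS' (S.card + 1) (by omega)).1 hcon
    omega
  · intro j hj1 hjM
    exact (hmemS' j hj1).1 hjM

/-- Kimberling's bounds on the non-anti-Pell sequences B¹ and B². -/
theorem stmt4 (A B : ℕ → ℕ) (h : AntiRec 2 ![1, 2] A B) :
    ∀ n, 1 ≤ n →
      (0 ≤ 3 * (B (2 * n - 1) : ℤ) - 7 * n + 6 ∧ 3 * (B (2 * n - 1) : ℤ) - 7 * n + 6 ≤ 3) ∧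
      (0 ≤ 3 * (B (2 * n) : ℤ) - 7 * n + 2 ∧ 3 * (B (2 * n) : ℤ) - 7 * n + 2 ≤ 3) := by
  obtain ⟨hC, hrec⟩ := h
  obtain ⟨hA, hB, hA1, hB1, hcomp⟩ := hC
  have hrec' : ∀ n, 1 ≤ n → A n = B (2 * n - 1) + 2 * B (2 * n) := by
    intro n hn
    have e := hrec n hn
    rw [Fin.sum_univ_two] at e
    have e1 : (n - 1) * 2 + (0 : Fin 2).val + 1 = 2 * n - 1 := by simp; omega
    have e2 : (n - 1) * 2 + (1 : Fin 2).val + 1 = 2 * n := by simp; omega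
    rw [e1, e2] at e
    simpa using e
  -- the bounds in ℕ form, by strong induction
  have main : ∀ n, 1 ≤ n →
      (7 * n ≤ 3 * B (2 * n - 1) + 6 ∧ 3 * B (2 * n - 1) + 3 ≤ 7 * n) ∧
      (7 * n ≤ 3 * B (2 * n) + 2 ∧ 3 * B (2 * n) + 2 ≤ 7 * n + 3) := by
    intro n
    induction n using Nat.strong_induction_on with
    | _ n ih =>
      intro hn
      have hx1 : 1 ≤ B (2 * n - 1) := hB1 _ (by omega)
      have hy1 : 1 ≤ B (2 * n) := hB1 _ (by omega)
      have hxy : B (2 * n - 1) < B (2 * n) :=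
        hB (Set.mem_Ici.2 (by omega)) (Set.mem_Ici.2 (by omega)) (by omega)
      have hAn : A n = B (2 * n - 1) + 2 * B (2 * n) := hrec' n hn
      -- generic treatment of an index k ∈ {2n-1, 2n}
      have handle : ∀ k, 1 ≤ k → B k < A n →
          ∃ c, B k = k + c ∧ c < n ∧ (1 ≤ c → A c ≤ B k) ∧ B k < A (c + 1) := by
        intro k hk hklt
        obtain ⟨c, h1, h2, h3, h4⟩ := antiPell_key ⟨hA, hB, hA1, hB1, hcomp⟩ k hk
        refine ⟨c, h1, ?_, h2, h3⟩
        by_contra hcon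
        push_neg at hcon
        have hc1 : 1 ≤ c := by omega
        have hAc : A c ≤ B k := h2 hc1
        have hmono : A n ≤ A c := by
          rcases Nat.eq_or_lt_of_le hcon with rfl | hlt
          · exact le_rfl
          · exact le_of_lt (hA (Set.mem_Ici.2 hn) (Set.mem_Ici.2 (by omega)) hlt)
        omega
      -- unpack IH-style facts for an index c with 1 ≤ c < n
      have ihfact : ∀ c, 1 ≤ c → c < n →
          A c = B (2 * c - 1) + 2 * B (2 * c) ∧
          (7 * c ≤ 3 * B (2 * c - 1) + 6 ∧ 3 * B (2 * c - 1) + 3 ≤ 7 * c) ∧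
          (7 * c ≤ 3 * B (2 * c) + 2 ∧ 3 * B (2 * c) + 2 ≤ 7 * c + 3) := by
        intro c hc1 hcn
        obtain ⟨p, q⟩ := ih c hcn hc1
        exact ⟨hrec' c hc1, p, q⟩
      -- y part: k = 2n
      have hy : 7 * n ≤ 3 * B (2 * n) + 2 ∧ 3 * B (2 * n) + 2 ≤ 7 * n + 3 := by
        obtain ⟨c, hc, hcn, hAc, hAc1⟩ := handle (2 * n) (by omega) (by omega)
        rcases Nat.eq_zero_or_pos c with rfl | hc1
        · -- c = 0
          simp only [Nat.zero_add] at hAc1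
          by_cases hlt : 1 < n
          · obtain ⟨e1, p1, q1⟩ := ihfact 1 le_rfl (by omega)
            have h1 : (2 : ℕ) * 1 - 1 = 1 := by norm_num
            rw [h1] at e1 p1
            omega
          · omega
        · obtain ⟨ec, pc, qc⟩ := ihfact c hc1 hcn
          have hAcle := hAc hc1
          by_cases hlt : c + 1 < n
          · obtain ⟨ec1, pc1, qc1⟩ := ihfact (c + 1) (by omega) hlt
            omega
          · omega
      -- x part: k = 2n-1
      have hx : 7 * n ≤ 3 * B (2 * n - 1) + 6 ∧ 3 * B (2 * n - 1) + 3 ≤ 7 * n := by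
        obtain ⟨c, hc, hcn, hAc, hAc1⟩ := handle (2 * n - 1) (by omega) (by omega)
        rcases Nat.eq_zero_or_pos c with rfl | hc1
        · simp only [Nat.zero_add] at hAc1
          by_cases hlt : 1 < n
          · obtain ⟨e1, p1, q1⟩ := ihfact 1 le_rfl (by omega)
            have h1 : (2 : ℕ) * 1 - 1 = 1 := by norm_num
            rw [h1] at e1 p1
            omega
          · omega
        · obtain ⟨ec, pc, qc⟩ := ihfact c hc1 hcn
          have hAcle := hAc hc1
          -- A c ≠ B (2n-1) by complementarity
          have hne : A c ≠ B (2 * n - 1) := by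
            intro heq
            rcases hcomp (B (2 * n - 1)) hx1 with ⟨_, hnB⟩ | ⟨hnA, _⟩
            · exact hnB ⟨2 * n - 1, by omega, rfl⟩
            · exact hnA ⟨c, hc1, heq⟩
          by_cases hlt : c + 1 < n
          · obtain ⟨ec1, pc1, qc1⟩ := ihfact (c + 1) (by omega) hlt
            omega
          · omega
      exact ⟨hx, hy⟩
  intro n hn
  obtain ⟨⟨p1, p2⟩, q1, q2⟩ := main n hn
  refine ⟨⟨by omega, by omega⟩, by omega, by omega⟩
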